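/- For every f ∈ 𝓛 there exists g ∈ 𝓜₁⁺ such that f(x) = 0 for almost every x with g(x) = 0 and ‖f‖_𝓛 = ‖h‖_{L²(ℝⁿ)}, where h(x) = f(x)/g(x) if g(x) ≠ 0 and h(x) = 0 otherwise (so that f = g·h almost everywhere). -/

import Mathlib

open MeasureTheory
open scoped ENNReal

noncomputable section

/-- The unit cube `K_a = a + (−1/2, 1/2]ⁿ` centered at `a ∈ ℤⁿ`. -/
def cube {n : ℕ} (a : Fin n → ℤ) : Set (Fin n → ℝ) :=
  {x | ∀ i, (a i : ℝ) - 1 / 2 < x i ∧ x i ≤ (a i : ℝ) + 1 / 2}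

/-- `‖χ_a f‖_{L^p}` : the `L^p` norm of `f` restricted to the cube `K_a`. -/
def pieceNorm {n : ℕ} {F : Type*} [NormedAddCommGroup F] (p : ℝ)
    (f : (Fin n → ℝ) → F) (a : Fin n → ℤ) : ℝ≥0∞ :=
  eLpNorm ((cube a).indicator f) (ENNReal.ofReal p) volume

/-- `f` belongs to the space `𝓛 = ℓ²_λ(L^p)`. -/
def MemL {n : ℕ} {F : Type*} [NormedAddCommGroup F] (p : ℝ) (lam : (Fin n → ℤ) → ℝ)
    (f : (Fin n → ℝ) → F) : Prop :=
  AEStronglyMeasurable f volume ∧ (∀ a, pieceNorm p f a < ∞) ∧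
    Summable fun a => lam a ^ 2 * (pieceNorm p f a).toReal ^ 2

/-- The square `‖f‖_𝓛²` of the norm of `𝓛 = ℓ²_λ(L^p)`. -/
def LnormSq {n : ℕ} {F : Type*} [NormedAddCommGroup F] (p : ℝ) (lam : (Fin n → ℤ) → ℝ)
    (f : (Fin n → ℝ) → F) : ℝ :=
  ∑' a, lam a ^ 2 * (pieceNorm p f a).toReal ^ 2

namespace Stmt16Aux

/-- The index of the cube containing `x`. -/
def idx {n : ℕ} (x : Fin n → ℝ) : Fin n → ℤ := fun i => ⌈x i - 1 / 2⌉

lemma mem_cube_iff {n : ℕ} (a : Fin n → ℤ) (x : Fin n → ℝ) : x ∈ cube a ↔ idx x = a := by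
  constructor
  · intro h
    funext i
    rcases h i with ⟨h1, h2⟩
    rw [idx, Int.ceil_eq_iff]
    constructor <;> [skip; skip] <;> push_cast <;> linarith
  · rintro rfl i
    have h1 := Int.ceil_lt_add_one (x i - 1 / 2)
    have h2 := Int.le_ceil (x i - 1 / 2)
    constructor
    · simp only [idx] at *; linarith
    · simp only [idx] at *; linarith

lemma mem_cube_idx {n : ℕ} (x : Fin n → ℝ) : x ∈ cube (idx x) := (mem_cube_iff _ x).2 rfl

lemma measurable_idx {n : ℕ} : Measurable (idx (n := n)) :=
  measurable_pi_lambda _ fun i => Int.measurable_ceil.comp ((measurable_pi_apply i).sub_const _)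

lemma measurableSet_cube {n : ℕ} (a : Fin n → ℤ) : MeasurableSet (cube a) := by
  have : cube a = Set.pi Set.univ fun i => Set.Ioc ((a i : ℝ) - 1 / 2) ((a i : ℝ) + 1 / 2) := by
    ext x; simp [cube, Set.mem_pi]
  rw [this]
  exact MeasurableSet.univ_pi fun i => measurableSet_Ioc

lemma disjoint_cube {n : ℕ} : Pairwise (Function.onFun Disjoint (cube (n := n))) := by
  intro a b hab
  refine Set.disjoint_left.2 fun x hxa hxb => hab ?_
  rw [← (mem_cube_iff a x).1 hxa, ← (mem_cube_iff b x).1 hxb]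

lemma iUnion_cube {n : ℕ} : (⋃ a, cube (n := n) a) = Set.univ :=
  Set.eq_univ_of_forall fun x => Set.mem_iUnion.2 ⟨idx x, mem_cube_idx x⟩

lemma lintegral_cube_sum {n : ℕ} (f : (Fin n → ℝ) → ℝ≥0∞) :
    ∫⁻ x, f x ∂volume = ∑' a, ∫⁻ x in cube a, f x ∂volume := by
  conv_lhs =>
    rw [← Measure.restrict_univ (μ := volume), ← iUnion_cube,
      Measure.restrict_iUnion disjoint_cube measurableSet_cube]
  exact lintegral_sum_measure f _

end Stmt16Aux

open Stmt16Aux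

theorem stmt16 {n : ℕ} (hn : 0 < n) (p q : ℝ) (hp1 : 1 < p) (hp2 : p < 2)
    (hq : 1 / p = 1 / 2 + 1 / q)
    (lam : (Fin n → ℤ) → ℝ) (hlam : ∀ a, 0 < lam a)
    (f : (Fin n → ℝ) → ℂ) (hf : MemL p lam f) :
    ∃ g : (Fin n → ℝ) → ℝ, Measurable g ∧ (∀ᵐ x ∂volume, 0 ≤ g x) ∧
      (∀ a, ENNReal.ofReal (lam a) * pieceNorm q g a ≤ 1) ∧
      (∀ᵐ x ∂volume, g x = 0 → f x = 0) ∧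
      eLpNorm (fun x => if g x = 0 then 0 else f x / (g x : ℂ)) 2 volume
        = ENNReal.ofReal (Real.sqrt (LnormSq p lam f)) := by
  -- basic exponent facts
  have hp0 : (0:ℝ) < p := by linarith
  have h12 : (1:ℝ)/2 < 1/p := one_div_lt_one_div_of_lt hp0 hp2
  have hq0 : (0:ℝ) < q := one_div_pos.mp (by linarith)
  set r : ℝ := p / q with hrdef
  have hr0 : 0 < r := div_pos hp0 hq0
  have hrq : r * q = p := div_mul_cancel₀ _ (ne_of_gt hq0)
  have hqq : 1/q = 1/p - 1/2 := by linarith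
  have hr' : r = 1 - p/2 := by
    have h1 : p * (1/q) = p * (1/p) - p * (1/2) := by rw [hqq]; ring
    rw [mul_one_div, mul_one_div, div_self (ne_of_gt hp0)] at h1
    rw [hrdef]; linarith
  have hr2 : 2 * r = 2 - p := by rw [hr']; ring
  have hpne : ENNReal.ofReal p ≠ 0 := by simp [hp0, le_of_lt]
  have hqne : ENNReal.ofReal q ≠ 0 := by simp [hq0, le_of_lt]
  -- measurable representative
  obtain ⟨hfm, hfin, hsum⟩ := hf
  set f' : (Fin n → ℝ) → ℂ := hfm.mk f with hf'def
  have hf'm : StronglyMeasurable f' := hfm.stronglyMeasurable_mk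
  have hff' : f =ᵐ[volume] f' := hfm.ae_eq_mk
  set N : (Fin n → ℤ) → ℝ≥0∞ := fun a => pieceNorm p f a with hNdef
  have hN' : ∀ a, pieceNorm p f' a = N a := by
    intro a
    refine eLpNorm_congr_ae ?_
    filter_upwards [hff'] with x hx
    simp only [Set.indicator]
    split <;> simp [hx]
  have hNtop : ∀ a, N a ≠ ∞ := fun a => (hfin a).ne
  -- the constant on each cube
  set c : (Fin n → ℤ) → ℝ := fun a =>
    if N a = 0 then 0 else (lam a * (N a).toReal ^ r)⁻¹ with hcdef
  have hc0 : ∀ a, 0 ≤ c a := by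
    intro a
    by_cases hNa : N a = 0 <;> simp only [hcdef, hNa, if_true, if_false, le_refl]
    exact inv_nonneg.2 (mul_nonneg (hlam a).le (Real.rpow_nonneg ENNReal.toReal_nonneg r))
  have hcpos : ∀ a, N a ≠ 0 → 0 < c a := by
    intro a ha
    have ht : 0 < (N a).toReal := ENNReal.toReal_pos ha (hNtop a)
    simp only [hcdef, ha, if_false]
    exact inv_pos.2 (mul_pos (hlam a) (Real.rpow_pos_of_pos ht r))
  -- the function g
  set g : (Fin n → ℝ) → ℝ := fun x => c (idx x) * ‖f' x‖ ^ r with hgdef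
  have hgm : Measurable g :=
    ((measurable_of_countable c).comp measurable_idx).mul
      ((Real.continuous_rpow_const hr0.le).measurable.comp hf'm.measurable.norm)
  have hg0 : ∀ x, 0 ≤ g x := fun x =>
    mul_nonneg (hc0 _) (Real.rpow_nonneg (norm_nonneg _) _)
  -- the basic L^p integral identity on each cube
  have hI : ∀ a, ∫⁻ x in cube a, (‖f' x‖₊ : ℝ≥0∞) ^ p ∂volume = N a ^ p := by
    intro a
    have h1 : pieceNorm p f' a
        = (∫⁻ x, (‖(cube a).indicator f' x‖₊ : ℝ≥0∞) ^ p ∂volume) ^ (1/p) := by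
      simp only [pieceNorm, eLpNorm_eq_lintegral_rpow_enorm_toReal hpne ENNReal.ofReal_ne_top,
        ENNReal.toReal_ofReal hp0.le, enorm_eq_nnnorm]
    have h2 : ∀ x, (‖(cube a).indicator f' x‖₊ : ℝ≥0∞) ^ p
        = (cube a).indicator (fun y => (‖f' y‖₊ : ℝ≥0∞) ^ p) x := by
      intro x
      by_cases hx : x ∈ cube a <;>
        simp [Set.indicator_of_mem, Set.indicator_of_notMem, hx,
          ENNReal.zero_rpow_of_pos hp0]
    rw [← hN' a, h1]
    simp only [h2]
    rw [lintegral_indicator (measurableSet_cube a), ← ENNReal.rpow_mul, one_div,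
      inv_mul_cancel₀ (ne_of_gt hp0), ENNReal.rpow_one]
  -- condition 3 : the M-norm bound
  have cond3 : ∀ a, ENNReal.ofReal (lam a) * pieceNorm q g a ≤ 1 := by
    intro a
    have hgq : pieceNorm q g a = ENNReal.ofReal (c a) * N a ^ r := by
      have h1 : pieceNorm q g a
          = (∫⁻ x, (‖(cube a).indicator g x‖₊ : ℝ≥0∞) ^ q ∂volume) ^ (1/q) := by
        simp only [pieceNorm, eLpNorm_eq_lintegral_rpow_enorm_toReal hqne ENNReal.ofReal_ne_top,
          ENNReal.toReal_ofReal hq0.le, enorm_eq_nnnorm]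
      have h2 : ∀ x, (‖(cube a).indicator g x‖₊ : ℝ≥0∞) ^ q
          = (cube a).indicator
              (fun y => ENNReal.ofReal (c a) ^ q * (‖f' y‖₊ : ℝ≥0∞) ^ p) x := by
        intro x
        by_cases hx : x ∈ cube a
        · rw [Set.indicator_of_mem hx, Set.indicator_of_mem hx]
          have hidx : idx x = a := (mem_cube_iff a x).1 hx
          have hgx : g x = c a * ‖f' x‖ ^ r := by simp only [hgdef, hidx]
          rw [← enorm_eq_nnnorm, Real.enorm_eq_ofReal (hg0 x), hgx, ENNReal.ofReal_mul (hc0 a),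
            ← ENNReal.ofReal_rpow_of_nonneg (norm_nonneg _) hr0.le,
            ENNReal.mul_rpow_of_nonneg _ _ hq0.le, ← ENNReal.rpow_mul, hrq,
            ofReal_norm, enorm_eq_nnnorm]
        · simp [Set.indicator_of_notMem, hx, ENNReal.zero_rpow_of_pos hq0]
      rw [h1]
      simp only [h2]
      rw [lintegral_indicator (measurableSet_cube a),
        lintegral_const_mul' _ _ (ENNReal.rpow_ne_top_of_nonneg hq0.le ENNReal.ofReal_ne_top),
        hI a, ENNReal.mul_rpow_of_nonneg _ _ (by positivity : (0:ℝ) ≤ 1/q),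
        ← ENNReal.rpow_mul, ← ENNReal.rpow_mul, mul_one_div, div_self (ne_of_gt hq0),
        ENNReal.rpow_one, mul_one_div]
    rw [hgq]
    by_cases haN : N a = 0
    · simp [hcdef, haN]
    · have ht : 0 < (N a).toReal := ENNReal.toReal_pos haN (hNtop a)
      have hcval : c a = (lam a * (N a).toReal ^ r)⁻¹ := by simp only [hcdef, haN, if_false]
      have hNr : N a ^ r = ENNReal.ofReal ((N a).toReal ^ r) := by
        rw [← ENNReal.ofReal_rpow_of_pos ht, ENNReal.ofReal_toReal (hNtop a)]
      rw [hNr, ← ENNReal.ofReal_mul (hc0 a), ← ENNReal.ofReal_mul (hlam a).le]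
      have : lam a * (c a * (N a).toReal ^ r) = 1 := by
        rw [hcval, ← mul_assoc]
        field_simp
        exact div_self (ne_of_gt (hlam a))
      rw [this, ENNReal.ofReal_one]
  -- condition 4 : f vanishes a.e. where g does
  have hzero : ∀ a, ∀ᵐ x ∂volume, x ∈ cube a → N a = 0 → f x = 0 := by
    intro a
    by_cases haN : N a = 0
    · have h0 : (cube a).indicator f =ᵐ[volume] 0 :=
        (eLpNorm_eq_zero_iff (hfm.indicator (measurableSet_cube a)) hpne).1 haN
      filter_upwards [h0] with x hx hmem _
      simpa [Set.indicator_of_mem hmem] using hx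
    · filter_upwards with x _ h; exact absurd h haN
  have cond4 : ∀ᵐ x ∂volume, g x = 0 → f x = 0 := by
    filter_upwards [hff', ae_all_iff.2 hzero] with x hx hall hgx
    have hgx' : c (idx x) * ‖f' x‖ ^ r = 0 := hgx
    rcases mul_eq_zero.1 hgx' with hc1 | hnr
    · have hN0 : N (idx x) = 0 := by
        by_contra hN0
        exact absurd hc1 (ne_of_gt (hcpos _ hN0))
      exact hall (idx x) (mem_cube_idx x) hN0
    · have hf0 : ‖f' x‖ = 0 := by
        by_contra hne
        have hpos : 0 < ‖f' x‖ := lt_of_le_of_ne (norm_nonneg _) (Ne.symm hne)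
        exact absurd hnr (ne_of_gt (Real.rpow_pos_of_pos hpos r))
      rw [hx]
      exact norm_eq_zero.1 hf0
  -- the main L² identity
  have hmain : ∫⁻ x, (‖(if g x = 0 then (0:ℂ) else f x / (g x : ℂ))‖₊ : ℝ≥0∞) ^ (2:ℝ) ∂volume
      = ENNReal.ofReal (LnormSq p lam f) := by
    rw [lintegral_cube_sum]
    have hterm : ∀ a,
        ∫⁻ x in cube a, (‖(if g x = 0 then (0:ℂ) else f x / (g x : ℂ))‖₊ : ℝ≥0∞) ^ (2:ℝ) ∂volume
          = ENNReal.ofReal (lam a ^ 2 * (N a).toReal ^ 2) := by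
      intro a
      by_cases haN : N a = 0
      · have hz : ∀ᵐ x ∂(volume.restrict (cube a)),
            (‖(if g x = 0 then (0:ℂ) else f x / (g x : ℂ))‖₊ : ℝ≥0∞) ^ (2:ℝ) = 0 := by
          filter_upwards [ae_restrict_of_ae (hzero a), ae_restrict_mem (measurableSet_cube a)]
            with x hx hmem
          have hfx : f x = 0 := hx hmem haN
          by_cases hg : g x = 0 <;>
            simp [hg, hfx, ENNReal.zero_rpow_of_pos (show (0:ℝ) < 2 by norm_num)]
        rw [lintegral_congr_ae hz, lintegral_zero]
        simp [haN]
      · have ht : 0 < (N a).toReal := ENNReal.toReal_pos haN (hNtop a)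
        set t := (N a).toReal with htdef
        have hcval : c a = (lam a * t ^ r)⁻¹ := by simp only [hcdef, haN, if_false, htdef]
        have hcp : 0 < c a := hcpos a haN
        have hkey : ∀ᵐ x ∂(volume.restrict (cube a)),
            (‖(if g x = 0 then (0:ℂ) else f x / (g x : ℂ))‖₊ : ℝ≥0∞) ^ (2:ℝ)
              = ENNReal.ofReal (lam a ^ 2 * t ^ (2 - p)) * (‖f' x‖₊ : ℝ≥0∞) ^ p := by
          filter_upwards [ae_restrict_of_ae hff', ae_restrict_mem (measurableSet_cube a)]
            with x hx hmem
          have hidx : idx x = a := (mem_cube_iff a x).1 hmem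
          have hgx : g x = c a * ‖f' x‖ ^ r := by simp only [hgdef, hidx]
          by_cases hf0 : f' x = 0
          · have hgz : g x = 0 := by
              rw [hgx, hf0, norm_zero, Real.zero_rpow (ne_of_gt hr0), mul_zero]
            simp [hgz, hf0, ENNReal.zero_rpow_of_pos hp0,
              ENNReal.zero_rpow_of_pos (show (0:ℝ) < 2 by norm_num)]
          · have hs : 0 < ‖f' x‖ := norm_pos_iff.2 hf0
            have hgpos : 0 < g x := by
              rw [hgx]; exact mul_pos hcp (Real.rpow_pos_of_pos hs r)
            rw [if_neg (ne_of_gt hgpos)]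
            have hnorm : ‖f x / (g x : ℂ)‖ = ‖f' x‖ / g x := by
              rw [norm_div, hx, Complex.norm_real, Real.norm_of_nonneg hgpos.le]
            rw [← enorm_eq_nnnorm, ← ofReal_norm, hnorm, ← enorm_eq_nnnorm, ← ofReal_norm,
              ENNReal.ofReal_rpow_of_nonneg (by positivity) (by norm_num : (0:ℝ) ≤ 2),
              ENNReal.ofReal_rpow_of_nonneg (norm_nonneg _) hp0.le,
              ← ENNReal.ofReal_mul (by positivity)]
            congr 1
            rw [show ((‖f' x‖ / g x) ^ (2:ℝ)) = (‖f' x‖ / g x) ^ 2 from by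
              rw [show (2:ℝ) = ((2:ℕ):ℝ) by norm_num, Real.rpow_natCast]]
            have e1 : t ^ (2 - p) = (t ^ r) ^ 2 := by
              rw [← hr2, mul_comm, Real.rpow_mul ht.le,
                show (2:ℝ) = ((2:ℕ):ℝ) by norm_num, Real.rpow_natCast]
            have e2 : ‖f' x‖ ^ p = ‖f' x‖ ^ 2 / (‖f' x‖ ^ r) ^ 2 := by
              have hp' : p = 2 - r * 2 := by linarith
              rw [hp', Real.rpow_sub hs, Real.rpow_mul hs.le,
                show (2:ℝ) = ((2:ℕ):ℝ) by norm_num, Real.rpow_natCast, Real.rpow_natCast]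
            rw [hgx, hcval, e1, e2]
            have hA : 0 < t ^ r := Real.rpow_pos_of_pos ht r
            have hB : 0 < ‖f' x‖ ^ r := Real.rpow_pos_of_pos hs r
            field_simp
        rw [lintegral_congr_ae hkey, lintegral_const_mul' _ _ ENNReal.ofReal_ne_top, hI a]
        rw [show N a ^ p = ENNReal.ofReal (t ^ p) from by
            rw [← ENNReal.ofReal_rpow_of_pos ht, htdef, ENNReal.ofReal_toReal (hNtop a)],
          ← ENNReal.ofReal_mul (by positivity)]
        congr 1
        have h3 : t ^ (2 - p) * t ^ p = t ^ (2:ℝ) := by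
          rw [← Real.rpow_add ht]; norm_num
        rw [mul_assoc, h3, show t ^ (2:ℝ) = t ^ 2 from by
          rw [show (2:ℝ) = ((2:ℕ):ℝ) by norm_num, Real.rpow_natCast]]
    rw [tsum_congr hterm,
      ← ENNReal.ofReal_tsum_of_nonneg (fun a => by positivity) hsum]
    rfl
  -- assemble
  refine ⟨g, hgm, Filter.Eventually.of_forall hg0, cond3, cond4, ?_⟩
  rw [eLpNorm_eq_lintegral_rpow_enorm_toReal (by norm_num) (by norm_num)]
  simp only [ENNReal.toReal_ofNat, enorm_eq_nnnorm]
  rw [hmain]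
  have hL : 0 ≤ LnormSq p lam f := tsum_nonneg fun a => by positivity
  rw [Real.sqrt_eq_rpow, ENNReal.ofReal_rpow_of_nonneg hL (by norm_num)]

end
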